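/- Let {S_i}_{i∈I} be a directed family of substructures of S with union S. Suppose for every finite list a_1,…,a_m ∈ S there is i ∈ I with a_1,…,a_m ∈ S_i such that for all j ≥ i there is an isomorphism f : S → S_j fixing each a_k. Then lim_I Th(S_i^*) = Th(S^*). -/

import Mathlib

open FirstOrder Language

/-- A theory: a set of sentences closed under (semantic) logical consequence. -/
def IsClosedTheory {L : FirstOrder.Language} (Δ : L.Theory) : Prop :=
  ∀ θ : L.Sentence, Δ ⊨ᵇ θ → θ ∈ Δ

/-- `limsup` of a family of theories: frequent membership. -/
def limsupTheory {L : FirstOrder.Language} {ι : Type*} [Preorder ι]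
    (Δ : ι → L.Theory) : L.Theory :=
  { θ | ∀ i, ∃ j, i ≤ j ∧ θ ∈ Δ j }

/-- `liminf` of a family of theories: eventual membership. -/
def liminfTheory {L : FirstOrder.Language} {ι : Type*} [Preorder ι]
    (Δ : ι → L.Theory) : L.Theory :=
  { θ | ∃ i, ∀ j, i ≤ j → θ ∈ Δ j }

/-- A theory is consistent when it is not the set of all sentences. -/
def ConsistentTheory {L : FirstOrder.Language} (Δ : L.Theory) : Prop :=
  Δ ≠ Set.univ

/-- A theory is complete when it contains each sentence or its negation. -/
def CompleteTheory' {L : FirstOrder.Language} (Δ : L.Theory) : Prop :=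
  ∀ θ : L.Sentence, θ ∈ Δ ∨ θ.not ∈ Δ

/-- The augmented theory of a substructure `N` of `M`, viewed inside the set of
sentences of `L[[M]]`: those sentences all of whose parameters come from `N`
(i.e. which are images of sentences of `L[[N]]`) and which are true in `N`. -/
def augTheory {L : FirstOrder.Language} {M : Type*} [L.Structure M]
    (N : L.Substructure M) : (L[[M]]).Theory :=
  { φ | ∃ ψ : (L[[↥N]]).Sentence,
      (L.lhomWithConstantsMap (Subtype.val : ↥N → M)).onSentence ψ = φ ∧ ↥N ⊨ ψ }

namespace LimitAux
open FirstOrder.Language.BoundedFormula FirstOrder.Language.Structure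
variable {L : Language} {α : Type*} {β : Type*}



def St {A : Type*} [L.Structure A] (v : α → A) : (L[[α]]).Structure A :=
  @Language.withConstantsStructure L A _ α (constantsOn.structure v)

def termConsts {δ : Type*} : (L[[α]]).Term δ → List α
  | Term.var _ => []
  | @Term.func _ _ 0 f ts =>
      Sum.casesOn f (fun _ => (List.ofFn fun i => termConsts (ts i)).flatten) fun c => [c]
  | @Term.func _ _ (_ + 1) f ts =>
      Sum.casesOn f (fun _ => (List.ofFn fun i => termConsts (ts i)).flatten) fun c =>
        isEmptyElim c

def bfConsts {δ : Type*} : ∀ {n : ℕ}, (L[[α]]).BoundedFormula δ n → List α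
  | _, BoundedFormula.falsum => []
  | _, BoundedFormula.equal t₁ t₂ => termConsts t₁ ++ termConsts t₂
  | _, BoundedFormula.rel _ ts => (List.ofFn fun i => termConsts (ts i)).flatten
  | _, BoundedFormula.imp f₁ f₂ => bfConsts f₁ ++ bfConsts f₂
  | _, BoundedFormula.all f => bfConsts f

@[simp] theorem lhom_onFunction_inl (g : α → β) {n : ℕ} (f₀ : L.Functions n) :
    (L.lhomWithConstantsMap g).onFunction (Sum.inl f₀) = Sum.inl f₀ := rfl

@[simp] theorem lhom_onFunction_inr (g : α → β) (c : α) :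
    (L.lhomWithConstantsMap g).onFunction (Sum.inr c : (L[[α]]).Functions 0) = Sum.inr (g c) := rfl

@[simp] theorem lhom_onRelation_inl (g : α → β) {n : ℕ} (R : L.Relations n) :
    (L.lhomWithConstantsMap g).onRelation (Sum.inl R) = Sum.inl R := rfl

theorem termConsts_onTerm (g : α → β) {δ : Type*} (t : (L[[α]]).Term δ) :
    termConsts ((L.lhomWithConstantsMap g).onTerm t) = (termConsts t).map g := by
  induction t with
  | var => rfl
  | @func n f ts ih =>
      cases n with
      | zero =>
          cases f with
          | inl f₀ =>
              simp only [LHom.onTerm, termConsts, List.map_flatten, List.map_ofFn, ih,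
                lhom_onFunction_inl, Function.comp_def]
          | inr c => rfl
      | succ n =>
          cases f with
          | inl f₀ =>
              simp only [LHom.onTerm, termConsts, List.map_flatten, List.map_ofFn, ih,
                lhom_onFunction_inl, Function.comp_def]
          | inr c => exact isEmptyElim c

theorem bfConsts_onBoundedFormula (g : α → β) {δ : Type*} {n : ℕ}
    (χ : (L[[α]]).BoundedFormula δ n) :
    bfConsts ((L.lhomWithConstantsMap g).onBoundedFormula χ) = (bfConsts χ).map g := by
  induction χ with
  | falsum => rfl
  | equal t₁ t₂ =>
      simp only [LHom.onBoundedFormula, Term.bdEqual, bfConsts, termConsts_onTerm,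
        List.map_append]
  | @rel n l R ts =>
      cases R with
      | inl R₀ =>
          simp only [LHom.onBoundedFormula, Relations.boundedFormula, bfConsts,
            lhom_onRelation_inl, List.map_flatten, List.map_ofFn, Function.comp_def,
            termConsts_onTerm]
      | inr R₀ => exact isEmptyElim R₀
  | imp f₁ f₂ ih₁ ih₂ =>
      simp only [LHom.onBoundedFormula, bfConsts, ih₁, ih₂, List.map_append]
  | all f ih => simpa only [LHom.onBoundedFormula, bfConsts] using ih

theorem onTerm_eq_self (k : α → α) {δ : Type*} (t : (L[[α]]).Term δ)
    (h : ∀ c ∈ termConsts t, k c = c) : (L.lhomWithConstantsMap k).onTerm t = t := by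
  induction t with
  | var => rfl
  | @func n f ts ih =>
      cases n with
      | zero =>
          cases f with
          | inl f₀ =>
              simp only [LHom.onTerm, lhom_onFunction_inl]
              congr 1
              funext i
              exact ih i fun c hc => h c (by
                simp only [termConsts, List.mem_flatten, List.mem_ofFn]
                exact ⟨_, ⟨i, rfl⟩, hc⟩)
          | inr c =>
              have hc : k c = c := h c (by simp [termConsts]; exact List.mem_singleton_self _)
              simp only [LHom.onTerm, lhom_onFunction_inr, hc]
              exact congrArg₂ Term.func (congrArg Sum.inr hc) (funext fun i => i.elim0)
      | succ n =>
          cases f with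
          | inl f₀ =>
              simp only [LHom.onTerm, lhom_onFunction_inl]
              congr 1
              funext i
              exact ih i fun c hc => h c (by
                simp only [termConsts, List.mem_flatten, List.mem_ofFn]
                exact ⟨_, ⟨i, rfl⟩, hc⟩)
          | inr c => exact isEmptyElim c

theorem onBoundedFormula_eq_self (k : α → α) {δ : Type*} {n : ℕ}
    (χ : (L[[α]]).BoundedFormula δ n) (h : ∀ c ∈ bfConsts χ, k c = c) :
    (L.lhomWithConstantsMap k).onBoundedFormula χ = χ := by
  induction χ with
  | falsum => rfl
  | equal t₁ t₂ =>
      simp only [LHom.onBoundedFormula, Term.bdEqual]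
      rw [onTerm_eq_self k t₁ fun c hc => h c (by simp [bfConsts, hc]),
        onTerm_eq_self k t₂ fun c hc => h c (by simp [bfConsts, hc])]
  | @rel n l R ts =>
      cases R with
      | inl R₀ =>
          simp only [LHom.onBoundedFormula, Relations.boundedFormula, lhom_onRelation_inl]
          congr 1
          funext i
          exact onTerm_eq_self k (ts i) fun c hc => h c (by
            simp only [bfConsts, List.mem_flatten, List.mem_ofFn]
            exact ⟨_, ⟨i, rfl⟩, hc⟩)
      | inr R₀ => exact isEmptyElim R₀
  | imp f₁ f₂ ih₁ ih₂ =>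
      simp only [LHom.onBoundedFormula]
      rw [ih₁ fun c hc => h c (by simp [bfConsts, hc]),
        ih₂ fun c hc => h c (by simp [bfConsts, hc])]
  | all f ih =>
      simp only [LHom.onBoundedFormula]
      rw [ih h]

theorem lhomWithConstantsMap_comp {γ : Type*} (g' : β → γ) (g : α → β) :
    (L.lhomWithConstantsMap g').comp (L.lhomWithConstantsMap g)
      = L.lhomWithConstantsMap (g' ∘ g) := by
  refine LHom.funext ?_ ?_
  · funext n f
    cases f with
    | inl f₀ => rfl
    | inr c =>
        cases n with
        | zero => rfl
        | succ n => exact isEmptyElim c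
  · funext n R
    cases R with
    | inl R₀ => rfl
    | inr R₀ => exact isEmptyElim R₀




theorem realize_term_congr {A : Type*} [L.Structure A] {v w : α → A} {δ : Type*}
    (t : (L[[α]]).Term δ) (h : ∀ c ∈ termConsts t, v c = w c) (x : δ → A) :
    @Term.realize _ A (St v) δ x t = @Term.realize _ A (St w) δ x t := by
  induction t with
  | var => rfl
  | @func n f ts ih =>
      cases n with
      | zero =>
          cases f with
          | inl f₀ =>
              show funMap f₀ (fun i => @Term.realize _ A (St v) δ x (ts i))
                  = funMap f₀ (fun i => @Term.realize _ A (St w) δ x (ts i))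
              congr 1
              funext i
              exact ih i fun c hc => h c (by
                simp only [termConsts, List.mem_flatten, List.mem_ofFn]
                exact ⟨_, ⟨i, rfl⟩, hc⟩) 
          | inr c =>
              show v c = w c
              exact h c (by simp [termConsts]; exact List.mem_singleton_self _)
      | succ n =>
          cases f with
          | inl f₀ =>
              show funMap f₀ (fun i => @Term.realize _ A (St v) δ x (ts i))
                  = funMap f₀ (fun i => @Term.realize _ A (St w) δ x (ts i))
              congr 1
              funext i
              exact ih i fun c hc => h c (by
                simp only [termConsts, List.mem_flatten, List.mem_ofFn]
                exact ⟨_, ⟨i, rfl⟩, hc⟩)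
          | inr c => exact isEmptyElim c

theorem realize_bf_congr {A : Type*} [L.Structure A] {v w : α → A} {δ : Type*} {n : ℕ}
    (χ : (L[[α]]).BoundedFormula δ n) (h : ∀ c ∈ bfConsts χ, v c = w c)
    (x : δ → A) (xs : Fin n → A) :
    @BoundedFormula.Realize _ A (St v) δ n χ x xs ↔ @BoundedFormula.Realize _ A (St w) δ n χ x xs := by
  induction χ with
  | falsum => exact Iff.rfl
  | equal t₁ t₂ =>
      show @Term.realize _ A (St v) _ _ t₁ = @Term.realize _ A (St v) _ _ t₂ ↔
        @Term.realize _ A (St w) _ _ t₁ = @Term.realize _ A (St w) _ _ t₂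
      rw [realize_term_congr t₁ (fun c hc => h c (by simp [bfConsts, hc])),
        realize_term_congr t₂ (fun c hc => h c (by simp [bfConsts, hc]))]
  | @rel n l R ts =>
      cases R with
      | inl R₀ =>
          show RelMap R₀ (fun i => @Term.realize _ A (St v) _ _ (ts i)) ↔
            RelMap R₀ (fun i => @Term.realize _ A (St w) _ _ (ts i))
          rw [show (fun i => @Term.realize _ A (St v) _ (Sum.elim x xs) (ts i))
              = (fun i => @Term.realize _ A (St w) _ (Sum.elim x xs) (ts i)) from
            funext fun i => realize_term_congr (ts i) (fun c hc => h c (by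
              simp only [bfConsts, List.mem_flatten, List.mem_ofFn]
              exact ⟨_, ⟨i, rfl⟩, hc⟩)) _]
      | inr R₀ => exact isEmptyElim R₀
  | imp f₁ f₂ ih₁ ih₂ =>
      exact imp_congr (ih₁ (fun c hc => h c (by simp [bfConsts, hc])) xs)
        (ih₂ (fun c hc => h c (by simp [bfConsts, hc])) xs)
  | all f ih =>
      exact forall_congr' fun a => ih h _




theorem isExpansionOn_st {A : Type*} [L.Structure A] (u : α → β) (z : β → A) :
    @LHom.IsExpansionOn _ _ (L.lhomWithConstantsMap u) A (St (fun c => z (u c))) (St z) := by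
  letI := St (L := L) (fun c => z (u c))
  letI := St (L := L) z
  refine ⟨?_, ?_⟩
  · intro n f x
    cases f with
    | inl f₀ => rfl
    | inr c =>
        cases n with
        | zero => rfl
        | succ n => exact isEmptyElim c
  · intro n R x
    cases R with
    | inl R₀ => rfl
    | inr R₀ => exact isEmptyElim R₀

theorem realize_onSentence_st {A : Type*} [L.Structure A] (u : α → β) (z : β → A)
    (χ : (L[[α]]).Sentence) :
    @Sentence.Realize _ A (St z) ((L.lhomWithConstantsMap u).onSentence χ)
      ↔ @Sentence.Realize _ A (St (fun c => z (u c))) χ :=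
  @LHom.realize_onSentence _ _ A (St (fun c => z (u c))) (St z) (L.lhomWithConstantsMap u)
    (isExpansionOn_st u z) χ

theorem realize_equiv_st {M N : Type*} [L.Structure M] [L.Structure N]
    (f : M ≃[L] N) (v : α → N) (χ : (L[[α]]).Sentence) :
    @Sentence.Realize _ M (St (fun c => f.symm (v c))) χ
      ↔ @Sentence.Realize _ N (St v) χ := by
  letI := St (L := L) (fun c => f.symm (v c))
  letI := St (L := L) v
  let F : @Language.Equiv (L[[α]]) M N _ _ :=
    { toEquiv := f.toEquiv
      map_fun' := by
        intro n fn x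
        cases fn with
        | inl f₀ => exact f.map_fun f₀ x
        | inr c =>
            cases n with
            | zero =>
                show f (f.symm (v c)) = v c
                exact f.apply_symm_apply (v c)
            | succ n => exact isEmptyElim c
      map_rel' := by
        intro n R x
        cases R with
        | inl R₀ => exact f.map_rel R₀ x
        | inr R₀ => exact isEmptyElim R₀ }
  exact StrongHomClass.realize_sentence F χ



end LimitAux

open LimitAux in
theorem key_lemma
    {L : FirstOrder.Language} {M : Type*} [L.Structure M] {ι : Type*}
    [PartialOrder ι] [IsDirected ι (· ≤ ·)] [Nonempty ι]
    (S : ι → L.Substructure M)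
    (horder : ∀ i j, i ≤ j ↔ S i ≤ S j)
    (hiso : ∀ (m : ℕ) (a : Fin m → M), ∃ i, (∀ k, a k ∈ S i) ∧
      ∀ j, i ≤ j → ∃ f : M ≃[L] ↥(S j), ∀ k, (f (a k) : M) = a k)
    (φ : (L[[M]]).Sentence) :
    ∃ i, ∀ j, i ≤ j → (φ ∈ augTheory (S j) ↔ M ⊨ φ) := by
  classical
  set cs : List M := bfConsts φ with hcs
  obtain ⟨i₀, hmem, hf⟩ := hiso cs.length cs.get
  have hmemcs : ∀ c ∈ cs, c ∈ S i₀ := by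
    intro c hc
    obtain ⟨k, hk⟩ := List.get_of_mem hc
    exact hk ▸ hmem k
  refine ⟨i₀, fun j hj => ?_⟩
  obtain ⟨f, hffix⟩ := hf j hj
  have hSij : S i₀ ≤ S j := (horder _ _).1 hj
  have hfix : ∀ c ∈ cs, ((f c : ↥(S j)) : M) = c := by
    intro c hc
    obtain ⟨k, hk⟩ := List.get_of_mem hc
    exact hk ▸ hffix k
  have hmem' : ∀ c ∈ cs, c ∈ S j := fun c hc => hSij (hmemcs c hc)
  constructor
  · rintro ⟨ψ, hψeq, hψ⟩
    have h2 : bfConsts φ = (bfConsts ψ).map (Subtype.val : ↥(S j) → M) := by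
      rw [← hψeq]; exact bfConsts_onBoundedFormula _ ψ
    have hagree : ∀ c ∈ bfConsts ψ, (f.symm c : M) = ((c : M) : M) := by
      intro c hc
      have hvc : (c : M) ∈ cs := by
        rw [hcs, h2]; exact List.mem_map_of_mem hc
      have h3 : f ((c : M)) = c := Subtype.ext (hfix _ hvc)
      have h4 := congrArg f.symm h3
      rw [f.symm_apply_apply] at h4
      exact h4.symm
    have step1 : @Sentence.Realize _ (↥(S j)) (St (fun c => c)) ψ := hψ
    have step2 : @Sentence.Realize _ M (St (fun c => f.symm ((fun c => c) c))) ψ :=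
      (realize_equiv_st f (fun c => c) ψ).2 step1
    have step3 : @Sentence.Realize _ M (St (fun c : ↥(S j) => ((fun x : M => x) ((c : M))))) ψ :=
      (realize_bf_congr ψ (fun c hc => hagree c hc) default default).1 step2
    have step4 : @Sentence.Realize _ M (St (fun x : M => x))
        ((L.lhomWithConstantsMap (Subtype.val : ↥(S j) → M)).onSentence ψ) :=
      (realize_onSentence_st (Subtype.val : ↥(S j) → M) (fun x : M => x) ψ).2 step3
    rw [hψeq] at step4
    exact step4
  · intro hφ
    have hNE : ∀ x : M, x ∈ cs → x ∈ S j := hmem'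
    let h : M → ↥(S j) := fun x => if hx : x ∈ cs then ⟨x, hNE x hx⟩ else f x
    have hh : ∀ c ∈ cs, h c = f c := by
      intro c hc
      have : h c = ⟨c, hNE c hc⟩ := dif_pos hc
      rw [this]
      exact Subtype.ext (hfix c hc).symm
    have hhval : ∀ c ∈ cs, ((h c : ↥(S j)) : M) = c := by
      intro c hc
      rw [hh c hc]
      exact hfix c hc
    refine ⟨(L.lhomWithConstantsMap h).onSentence φ, ?_, ?_⟩
    · have e1 : (L.lhomWithConstantsMap (Subtype.val : ↥(S j) → M)).onSentence
          ((L.lhomWithConstantsMap h).onSentence φ)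
          = ((L.lhomWithConstantsMap (Subtype.val : ↥(S j) → M)).comp
              (L.lhomWithConstantsMap h)).onSentence φ :=
        (congrFun (LHom.comp_onBoundedFormula _ _) φ).symm
      rw [e1, lhomWithConstantsMap_comp]
      exact onBoundedFormula_eq_self _ φ (fun c hc => hhval c hc)
    · have hagree2 : ∀ c ∈ bfConsts φ, ((fun x : M => x) c) = f.symm (h c) := by
        intro c hc
        rw [hh c hc, f.symm_apply_apply]
      have step1 : @Sentence.Realize _ M (St (fun x : M => x)) φ := hφ
      have step2 : @Sentence.Realize _ M (St (fun c : M => f.symm (h c))) φ :=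
        (realize_bf_congr φ (fun c hc => (hagree2 c hc).symm) default default).2 step1
      have step3 : @Sentence.Realize _ (↥(S j)) (St h) φ :=
        (realize_equiv_st f h φ).1 step2
      have step4 : @Sentence.Realize _ (↥(S j)) (St (fun c : ↥(S j) => c))
          ((L.lhomWithConstantsMap h).onSentence φ) :=
        (realize_onSentence_st h (fun c : ↥(S j) => c) φ).2 step3
      exact step4

theorem limit_augTheory_of_isomorphisms_fixing_finitely_many
    {L : FirstOrder.Language} {M : Type*} [L.Structure M] {ι : Type*}
    [PartialOrder ι] [IsDirected ι (· ≤ ·)] [Nonempty ι]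
    (S : ι → L.Substructure M)
    (horder : ∀ i j, i ≤ j ↔ S i ≤ S j)
    (hunion : ∀ x : M, ∃ i, x ∈ S i)
    (hiso : ∀ (m : ℕ) (a : Fin m → M), ∃ i, (∀ k, a k ∈ S i) ∧
      ∀ j, i ≤ j → ∃ f : M ≃[L] ↥(S j), ∀ k, (f (a k) : M) = a k) :
    limsupTheory (fun i => augTheory (S i)) = (L[[M]]).completeTheory M ∧
    liminfTheory (fun i => augTheory (S i)) = (L[[M]]).completeTheory M := by
  have key := key_lemma S horder hiso
  constructor
  · ext φ
    simp only [limsupTheory, Set.mem_setOf_eq, mem_completeTheory]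
    constructor
    · intro hφ
      obtain ⟨i, hi⟩ := key φ
      obtain ⟨j, hij, hj⟩ := hφ i
      exact (hi j hij).1 hj
    · intro hφ i
      obtain ⟨i₀, hi⟩ := key φ
      obtain ⟨j, h1, h2⟩ := directed_of (· ≤ ·) i i₀
      exact ⟨j, h1, (hi j h2).2 hφ⟩
  · ext φ
    simp only [liminfTheory, Set.mem_setOf_eq, mem_completeTheory]
    constructor
    · rintro ⟨i, hi⟩
      obtain ⟨i₀, h₀⟩ := key φ
      obtain ⟨j, h1, h2⟩ := directed_of (· ≤ ·) i i₀
      exact (h₀ j h2).1 (hi j h1)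
    · intro hφ
      obtain ⟨i₀, h₀⟩ := key φ
      exact ⟨i₀, fun j hj => (h₀ j hj).2 hφ⟩
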